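/- The solution of the ODE system d/dt p(n,t) = β(t)·n·p(n−1,t) − β(t)·(n+1)·p(n,t) with initial condition p(n,0) = [n=0] is uniquely p(n,t) = α(t)·(1−α(t))^n where α(t) = exp(−∫₀ᵗ β(s) ds). -/

import Mathlib

private lemma aux_vanish (β : ℝ → ℝ) (hβc : Continuous β) (k : ℝ) (g : ℝ → ℝ)
    (hgc : Continuous g) (hg0 : g 0 = 0)
    (hg' : ∀ s, 0 ≤ s → HasDerivAt g (-(k * β s * g s)) s) :
    ∀ t, 0 ≤ t → g t = 0 := by
  intro t ht
  set B : ℝ → ℝ := fun u => ∫ s in (0:ℝ)..u, β s with hB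
  have hBd : ∀ s, HasDerivAt B (β s) s := fun s =>
    (hβc.integral_hasStrictDerivAt 0 s).hasDerivAt
  set E : ℝ → ℝ := fun u => Real.exp (k * B u) with hE
  have hEd : ∀ s, HasDerivAt E (E s * (k * β s)) s := fun s =>
    (HasDerivAt.exp ((hBd s).const_mul k))
  have hEc : Continuous E := by
    apply Real.continuous_exp.comp
    exact continuous_const.mul (Differentiable.continuous fun s => (hBd s).differentiableAt)
  have key : ∀ x ∈ Set.Icc (0:ℝ) t, g x * E x = g 0 * E 0 := by
    apply constant_of_has_deriv_right_zero ((hgc.mul hEc).continuousOn)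
    intro x hx
    have hx0 : 0 ≤ x := hx.1
    have : HasDerivAt (fun u => g u * E u) 0 x := by
      have := (hg' x hx0).mul (hEd x)
      refine this.congr_deriv ?_
      ring
    exact this.hasDerivWithinAt
  have h0 : g 0 * E 0 = 0 := by rw [hg0]; ring
  have := key t ⟨ht, le_refl t⟩
  rw [h0] at this
  have hEne : E t ≠ 0 := Real.exp_ne_zero _
  exact (mul_eq_zero.mp this).resolve_right hEne

/-- The solution of the ODE system
`d/dt p(n,t) = β(t)·n·p(n−1,t) − β(t)·(n+1)·p(n,t)` with initial condition
`p(n,0) = [n = 0]` is uniquely `p(n,t) = α(t)·(1−α(t))^n`,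
where `α(t) = exp(−∫₀ᵗ β(s) ds)`: any differentiable family of functions satisfying
the system agrees with this formula. -/
theorem birth_ode_unique_solution
    (β : ℝ → ℝ) (hβc : Continuous β) (hβ0 : ∀ t, 0 ≤ β t)
    (p : ℕ → ℝ → ℝ)
    (hinit : ∀ n : ℕ, p n 0 = if n = 0 then 1 else 0)
    (hode : ∀ (n : ℕ) (t : ℝ),
      HasDerivAt (p n) (β t * n * p (n - 1) t - β t * (n + 1) * p n t) t) :
    ∀ (n : ℕ) (t : ℝ), 0 ≤ t →
      p n t = Real.exp (-∫ s in (0:ℝ)..t, β s) *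
        (1 - Real.exp (-∫ s in (0:ℝ)..t, β s)) ^ n := by
  set B : ℝ → ℝ := fun u => ∫ s in (0:ℝ)..u, β s with hBdef
  have hBd : ∀ s, HasDerivAt B (β s) s := fun s =>
    (hβc.integral_hasStrictDerivAt 0 s).hasDerivAt
  set α : ℝ → ℝ := fun u => Real.exp (-B u) with hαdef
  have hαd : ∀ s, HasDerivAt α (-(β s * α s)) s := by
    intro s
    have := (HasDerivAt.exp ((hBd s).neg))
    refine this.congr_deriv ?_
    simp only [hαdef, Pi.neg_apply]; ring
  have hα0 : α 0 = 1 := by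
    simp [hαdef, hBdef, intervalIntegral.integral_same]
  have hαc : Continuous α :=
    Differentiable.continuous fun s => (hαd s).differentiableAt
  have hpc : ∀ n, Continuous (p n) := fun n =>
    Differentiable.continuous fun s => (hode n s).differentiableAt
  set f : ℕ → ℝ → ℝ := fun n u => α u * (1 - α u) ^ n with hfdef
  have hfd : ∀ (n : ℕ) (s : ℝ), HasDerivAt (f n)
      (-(β s * α s) * (1 - α s) ^ n
        + α s * ((n : ℝ) * (1 - α s) ^ (n - 1) * (β s * α s))) s := by
    intro n s
    have h1 : HasDerivAt (fun u => 1 - α u) (β s * α s) s := by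
      have := (hαd s).const_sub 1
      refine this.congr_deriv ?_; ring
    exact (hαd s).mul (h1.pow n)
  have hfc : ∀ n, Continuous (f n) := fun n =>
    hαc.mul ((continuous_const.sub hαc).pow n)
  intro n
  induction n with
  | zero =>
    intro t ht
    have := aux_vanish β hβc 1 (fun u => p 0 u - f 0 u)
      ((hpc 0).sub (hfc 0)) (by simp [hinit 0, hfdef, hα0])
      (fun s _ => by
        have hp := hode 0 s
        have hf := hfd 0 s
        have := hp.sub hf
        refine this.congr_deriv ?_
        simp [hfdef]
        ring) t ht
    have h2 : p 0 t - f 0 t = 0 := this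
    have : p 0 t = f 0 t := by linarith
    simpa [hfdef, hαdef, hBdef] using this
  | succ n ih =>
    intro t ht
    have main := aux_vanish β hβc ((n : ℝ) + 2) (fun u => p (n + 1) u - f (n + 1) u)
      ((hpc (n + 1)).sub (hfc (n + 1)))
      (by simp [hinit (n + 1), hfdef, hα0])
      (fun s hs => by
        have hp := hode (n + 1) s
        have hf := hfd (n + 1) s
        have hIH : p n s = f n s := by
          have := ih s hs
          simpa [hfdef, hαdef, hBdef] using this
        simp only [Nat.add_sub_cancel] at hp
        have := hp.sub hf
        refine this.congr_deriv ?_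
        rw [hIH]
        simp only [hfdef, Nat.add_sub_cancel]
        push_cast
        ring) t ht
    have h2 : p (n + 1) t - f (n + 1) t = 0 := main
    have : p (n + 1) t = f (n + 1) t := by linarith
    simpa [hfdef, hαdef, hBdef] using this
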